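/- Let N be a positive integer, (X, μ) a measure space, g : X → ℝ an integrable function, and u : X → ℂ^N a measurable function with ‖u(x)‖ = 1 for μ-almost every x, such that the matrix-valued map x ↦ g(x)·(u(x) u(x)†) is Bochner integrable. Define the N×N complex matrix C := ∫ g(x) (u(x) u(x)†) dμ(x), where u(x) u(x)† denotes the rank-one matrix with entries u(x)_n · conj(u(x)_{n'}). Then C is Hermitian, and the sum of the absolute values of the eigenvalues of C is at most ∫ |g(x)| dμ(x). -/

import Mathlib

open MeasureTheory Matrix

/-- **Extended Bochner bound, abstract form.**
For an integrable `g : X → ℝ` and a measurable `u : X → ℂ^N` with `‖u x‖ = 1` a.e.,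
the matrix `C := ∫ g x • (u x)(u x)† dμ` is Hermitian and the sum of the absolute
values of its eigenvalues is at most `∫ |g| dμ`. -/
theorem stmt0 {N : ℕ} (hN : 0 < N) {X : Type*} [MeasurableSpace X] (μ : Measure X)
    [MeasurableSpace (EuclideanSpace ℂ (Fin N))]
    [BorelSpace (EuclideanSpace ℂ (Fin N))]
    (g : X → ℝ) (hg : Integrable g μ)
    (u : X → EuclideanSpace ℂ (Fin N)) (hu : Measurable u)
    (hnorm : ∀ᵐ x ∂μ, ‖u x‖ = 1)
    (hint : ∀ n n' : Fin N,
      Integrable (fun x => (g x : ℂ) * (u x n * (starRingEnd ℂ) (u x n'))) μ)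
    (C : Matrix (Fin N) (Fin N) ℂ)
    (hCdef : ∀ n n', C n n' = ∫ x, (g x : ℂ) * (u x n * (starRingEnd ℂ) (u x n')) ∂μ) :
    C.IsHermitian ∧
      ∀ hC : C.IsHermitian, ∑ i, |hC.eigenvalues i| ≤ ∫ x, |g x| ∂μ := by
  constructor
  · -- Hermitian
    refine Matrix.IsHermitian.ext fun n n' => ?_
    rw [hCdef, hCdef, RCLike.star_def, ← integral_conj]
    congr 1
    funext x
    simp only [_root_.map_mul, Complex.conj_conj, Complex.conj_ofReal]
    ring
  · intro hC
    -- for each i, set v := eigenvector, w x := ⟪v, u x⟫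
    set b := hC.eigenvectorBasis with hb
    set w : Fin N → X → ℂ := fun i x => ∑ n, (starRingEnd ℂ) (b i n) * u x n with hw
    -- each complex integrand is integrable
    have hzint : ∀ i : Fin N, Integrable
        (fun x => (g x : ℂ) * (w i x * (starRingEnd ℂ) (w i x))) μ := by
      intro i
      have : (fun x => (g x : ℂ) * (w i x * (starRingEnd ℂ) (w i x)))
          = fun x => ∑ n, ∑ m, ((starRingEnd ℂ) (b i n) * b i m) *
              ((g x : ℂ) * (u x n * (starRingEnd ℂ) (u x m))) := by
        funext x
        simp only [hw, map_sum, _root_.map_mul, Complex.conj_conj]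
        rw [Finset.sum_mul_sum, Finset.mul_sum]
        refine Finset.sum_congr rfl fun n _ => ?_
        rw [Finset.mul_sum]
        refine Finset.sum_congr rfl fun m _ => ?_
        ring
      rw [this]
      exact integrable_finset_sum _ fun n _ => integrable_finset_sum _ fun m _ =>
        ((hint n m).const_mul _)
    -- eigenvalue formula
    have hev : ∀ i : Fin N, hC.eigenvalues i
        = ∫ x, g x * Complex.normSq (w i x) ∂μ := by
      intro i
      have h1 : (hC.eigenvalues i : ℂ) = star (⇑(b i)) ⬝ᵥ (C *ᵥ ⇑(b i)) := by
        rw [hb, hC.mulVec_eigenvectorBasis]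
        rw [dotProduct_smul]
        have hd : star (⇑(hC.eigenvectorBasis i)) ⬝ᵥ ⇑(hC.eigenvectorBasis i)
            = (inner ℂ (hC.eigenvectorBasis i) (hC.eigenvectorBasis i) : ℂ) := by
          simp only [dotProduct, PiLp.inner_apply, RCLike.inner_apply, Pi.star_apply, RCLike.star_def]
          refine Finset.sum_congr rfl fun j _ => ?_
          ring
        rw [hd, inner_self_eq_norm_sq_to_K,
          hC.eigenvectorBasis.orthonormal.1 i]
        simp
      have h2 : star (⇑(b i)) ⬝ᵥ (C *ᵥ ⇑(b i))
          = ∫ x, (g x : ℂ) * (w i x * (starRingEnd ℂ) (w i x)) ∂μ := by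
        have expand : star (⇑(b i)) ⬝ᵥ (C *ᵥ ⇑(b i))
            = ∑ n, ∑ m, ((starRingEnd ℂ) (b i n) * b i m) * C n m := by
          simp only [dotProduct, Matrix.mulVec, Pi.star_apply, RCLike.star_def,
            Finset.mul_sum]
          refine Finset.sum_congr rfl fun n _ => Finset.sum_congr rfl fun m _ => ?_
          ring
        rw [expand]
        have : ∀ n m : Fin N, ((starRingEnd ℂ) (b i n) * b i m) * C n m
            = ∫ x, ((starRingEnd ℂ) (b i n) * b i m) *
                ((g x : ℂ) * (u x n * (starRingEnd ℂ) (u x m))) ∂μ := by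
          intro n m
          rw [hCdef, integral_const_mul]
        calc ∑ n, ∑ m, ((starRingEnd ℂ) (b i n) * b i m) * C n m
            = ∑ n, ∫ x, ∑ m, ((starRingEnd ℂ) (b i n) * b i m) *
                ((g x : ℂ) * (u x n * (starRingEnd ℂ) (u x m))) ∂μ := by
              refine Finset.sum_congr rfl fun n _ => ?_
              rw [Finset.sum_congr rfl fun m _ => this n m]
              exact (integral_finset_sum _ fun m _ => ((hint n m).const_mul _)).symm
          _ = ∫ x, ∑ n, ∑ m, ((starRingEnd ℂ) (b i n) * b i m) *
                ((g x : ℂ) * (u x n * (starRingEnd ℂ) (u x m))) ∂μ :=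
              (integral_finset_sum _ fun n _ => integrable_finset_sum _ fun m _ =>
                ((hint n m).const_mul _)).symm
          _ = ∫ x, (g x : ℂ) * (w i x * (starRingEnd ℂ) (w i x)) ∂μ := by
              congr 1
              funext x
              simp only [hw, map_sum, _root_.map_mul, Complex.conj_conj]
              rw [Finset.sum_mul_sum, Finset.mul_sum]
              refine (Finset.sum_congr rfl fun n _ => ?_).symm
              rw [Finset.mul_sum]
              refine Finset.sum_congr rfl fun m _ => ?_
              ring
      have h3 : (fun x => (g x : ℂ) * (w i x * (starRingEnd ℂ) (w i x)))
          = fun x => ((g x * Complex.normSq (w i x) : ℝ) : ℂ) := by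
        funext x
        rw [Complex.mul_conj]
        push_cast
        ring
      have := h1.trans h2
      have h4 : ∫ x, ((g x * Complex.normSq (w i x) : ℝ) : ℂ) ∂μ
          = ((∫ x, g x * Complex.normSq (w i x) ∂μ : ℝ) : ℂ) := integral_ofReal (𝕜 := ℂ)
      rw [h3, h4] at this
      exact_mod_cast this
    -- integrability of real integrands
    have hrint : ∀ i : Fin N, Integrable (fun x => g x * Complex.normSq (w i x)) μ := by
      intro i
      have h := (hzint i).re
      have heq : (fun x => RCLike.re ((g x : ℂ) * (w i x * (starRingEnd ℂ) (w i x))))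
          = fun x => g x * Complex.normSq (w i x) := by
        funext x
        rw [Complex.mul_conj, RCLike.re_to_complex]
        norm_cast
      rwa [heq] at h
    -- Parseval: ∑ i, normSq (w i x) = ‖u x‖ ^ 2
    have hpars : ∀ x, (∑ i, Complex.normSq (w i x)) = ‖u x‖ ^ 2 := by
      intro x
      have key := b.sum_inner_mul_inner (u x) (u x)
      have hterm : ∀ i : Fin N, (inner ℂ (u x) (b i) : ℂ) * inner ℂ (b i) (u x)
          = (Complex.normSq (w i x) : ℂ) := by
        intro i
        have hwi : (inner ℂ (b i) (u x) : ℂ) = w i x := by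
          simp [hw, PiLp.inner_apply, RCLike.inner_apply, mul_comm]
        have hwi' : (inner ℂ (u x) (b i) : ℂ) = (starRingEnd ℂ) (w i x) := by
          rw [← inner_conj_symm, hwi]
        rw [hwi, hwi', mul_comm, Complex.mul_conj]
      rw [Finset.sum_congr rfl fun i _ => hterm i] at key
      have : ((∑ i, Complex.normSq (w i x) : ℝ) : ℂ) = ((‖u x‖ ^ 2 : ℝ) : ℂ) := by
        push_cast
        rw [key, inner_self_eq_norm_sq_to_K]
        norm_cast
      exact_mod_cast this
    -- combine
    calc ∑ i, |hC.eigenvalues i|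
        ≤ ∑ i, ∫ x, |g x| * Complex.normSq (w i x) ∂μ := by
          refine Finset.sum_le_sum fun i _ => ?_
          rw [hev i, ← Real.norm_eq_abs]
          refine (norm_integral_le_integral_norm _).trans_eq ?_
          congr 1
          funext x
          rw [Real.norm_eq_abs, abs_mul, abs_of_nonneg (Complex.normSq_nonneg _)]
      _ = ∫ x, ∑ i, |g x| * Complex.normSq (w i x) ∂μ := by
          rw [← integral_finset_sum]
          intro i _
          have := (hrint i).abs
          have heq : (fun x => |g x * Complex.normSq (w i x)|)
              = fun x => |g x| * Complex.normSq (w i x) := by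
            funext x
            rw [abs_mul, abs_of_nonneg (Complex.normSq_nonneg _)]
          rwa [heq] at this
      _ = ∫ x, |g x| ∂μ := by
          refine integral_congr_ae ?_
          filter_upwards [hnorm] with x hx
          rw [← Finset.mul_sum, hpars, hx]
          simp
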